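/- Let D be a category, C ⊆ D a full subcategory whose inclusion ι admits a right adjoint G : D → C, and suppose the composite ι ∘ G : D → D admits a left adjoint T : D → D. Then for every object X of D, the object T(X) lies in C (up to isomorphism), and the induced functor F : D → C is left adjoint to ι. -/

import Mathlib

open CategoryTheory

/-- Let `ι : C ⥤ D` be a fully faithful inclusion admitting a right adjoint
`G`, and suppose the composite `ι ∘ G : D ⥤ D` admits a left adjoint `T`.
Then every `T(X)` lies in the (essential image of the) subcategory `C`, and
`ι` admits a left adjoint `F : D ⥤ C`. -/
theorem coreflective_left_adjoint
    {C D : Type*} [Category C] [Category D]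
    (ι : C ⥤ D) [ι.Full] [ι.Faithful]
    (G : D ⥤ C) (adjG : ι ⊣ G)
    (T : D ⥤ D) (adjT : T ⊣ G ⋙ ι) :
    (∀ X : D, ∃ Y : C, Nonempty (T.obj X ≅ ι.obj Y)) ∧
    ∃ F : D ⥤ C, Nonempty (F ⊣ ι) := by
  -- the counit of `adjG` at `T X` is an isomorphism
  have hiso : ∀ X : D, IsIso (adjG.counit.app (T.obj X)) := by
    intro X
    -- the section of the counit
    set f : T.obj X ⟶ ι.obj (G.obj (T.obj X)) :=
      (adjT.homEquiv X (ι.obj (G.obj (T.obj X)))).symm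
        (adjT.unit.app X ≫ ι.map (adjG.unit.app (G.obj (T.obj X)))) with hf
    have h1 : f ≫ adjG.counit.app (T.obj X) = 𝟙 (T.obj X) := by
      rw [hf, ← Adjunction.homEquiv_naturality_right_symm]
      have harg : (adjT.unit.app X ≫ ι.map (adjG.unit.app (G.obj (T.obj X)))) ≫
          (G ⋙ ι).map (adjG.counit.app (T.obj X)) = adjT.unit.app X := by
        simp only [Functor.comp_map, Category.assoc, ← ι.map_comp]
        rw [adjG.right_triangle_components]
        simp
      rw [harg, ← adjT.homEquiv_id X]
      exact (adjT.homEquiv X (T.obj X)).symm_apply_apply (𝟙 (T.obj X))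
    -- composition with the counit is injective on morphisms out of the image of `ι`
    have hinj : ∀ (c : C) (h₁ h₂ : ι.obj c ⟶ ι.obj (G.obj (T.obj X))),
        h₁ ≫ adjG.counit.app (T.obj X) = h₂ ≫ adjG.counit.app (T.obj X) → h₁ = h₂ := by
      intro c h₁ h₂ hh
      obtain ⟨g₁, rfl⟩ := ι.map_surjective h₁
      obtain ⟨g₂, rfl⟩ := ι.map_surjective h₂
      exact congrArg ι.map ((adjG.homEquiv c (T.obj X)).symm.injective hh)
    have h2 : adjG.counit.app (T.obj X) ≫ f = 𝟙 (ι.obj (G.obj (T.obj X))) := by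
      apply hinj _ (adjG.counit.app (T.obj X) ≫ f) (𝟙 _)
      rw [Category.assoc, h1]
      simp
    exact ⟨f, h2, h1⟩
  constructor
  · intro X
    exact ⟨G.obj (T.obj X), ⟨(@asIso _ _ _ _ _ (hiso X)).symm⟩⟩
  · refine ⟨T ⋙ G, ⟨?_⟩⟩
    letI : ∀ X : D, IsIso (adjG.counit.app (T.obj X)) := hiso
    have e : (T ⋙ G) ⋙ ι ≅ T :=
      NatIso.ofComponents (fun X => asIso (adjG.counit.app (T.obj X)))
        (fun {X Y} g => adjG.counit.naturality (T.map g))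
    have comm1 : 𝟭 D ⋙ T ≅ (T ⋙ G) ⋙ ι := Functor.leftUnitor T ≪≫ e.symm
    have comm2 : ι ⋙ (G ⋙ ι) ≅ ι ⋙ 𝟭 D :=
      (Functor.associator ι G ι).symm ≪≫
        Functor.isoWhiskerRight (asIso adjG.unit).symm ι ≪≫ Functor.leftUnitor ι ≪≫
        (Functor.rightUnitor ι).symm
    exact adjT.restrictFullyFaithful (Functor.FullyFaithful.id D)
      (Functor.FullyFaithful.ofFullyFaithful ι) comm1 comm2
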